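/- Let d, R ∈ ℕ with R ≥ 1, let C_0, …, C_R be d×d complex matrices such that z ↦ det(Σ_{n=0}^R z^{R−n} C_n) is not identically zero, and let γ : ℕ → ℂ^d be a bounded sequence satisfying Σ_{n=0}^R C_n · γ(r+n) = 0 for all r ∈ ℕ. Then no component of γ exhibits power-law decay: for every index j, every real s > 0, and every c ∈ ℂ, if r^s · γ(r)_j → c as r → ∞ then c = 0. -/

import Mathlib

open scoped BigOperators
open Polynomial Filter Finset

set_option maxHeartbeats 1000000
set_option synthInstance.maxHeartbeats 400000

noncomputable section NoPowerLawAux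

/-- Shift endomorphism on sequences valued in a `ℂ`-module. -/
def shiftL (W : Type*) [AddCommGroup W] [Module ℂ W] : Module.End ℂ (ℕ → W) where
  toFun v := fun r => v (r + 1)
  map_add' _ _ := rfl
  map_smul' _ _ := rfl

lemma shiftL_pow {W : Type*} [AddCommGroup W] [Module ℂ W] (k : ℕ) (v : ℕ → W) (r : ℕ) :
    ((shiftL W) ^ k) v r = v (r + k) := by
  induction k generalizing r with
  | zero => rfl
  | succ k ih =>
    rw [pow_succ']
    have : ((shiftL W) * (shiftL W) ^ k) v r = ((shiftL W) ^ k) v (r + 1) := rfl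
    rw [this, ih]; ring_nf

lemma aeval_shiftL {W : Type*} [AddCommGroup W] [Module ℂ W] (p : ℂ[X]) (v : ℕ → W) (r : ℕ) :
    (aeval (shiftL W) p) v r = ∑ i ∈ Finset.range (p.natDegree + 1), p.coeff i • v (r + i) := by
  rw [aeval_eq_sum_range]
  rw [LinearMap.coe_sum, Finset.sum_apply, Finset.sum_apply]
  refine Finset.sum_congr rfl fun i _ => ?_
  rw [LinearMap.smul_apply]
  simp [shiftL_pow]

lemma sub_one_pow_eq_zero_of_tendsto (m : ℕ) (u : ℕ → ℂ)
    (h : ((shiftL ℂ - 1) ^ m) u = 0) (hu : Filter.Tendsto u atTop (nhds 0)) : u = 0 := by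
  induction m generalizing u with
  | zero => simpa using h
  | succ m ih =>
    set w : ℕ → ℂ := fun r => u (r + 1) - u r with hw
    have hw' : (shiftL ℂ - 1) u = w := rfl
    have h1 : ((shiftL ℂ - 1) ^ m) w = 0 := by
      rw [← hw', ← Module.End.mul_apply, ← pow_succ]
      exact h
    have hwlim : Tendsto w atTop (nhds 0) := by
      have h2 : Tendsto (fun r => u (r + 1)) atTop (nhds 0) :=
        hu.comp (tendsto_add_atTop_nat 1)
      simpa using h2.sub hu
    have hw0 : w = 0 := ih w h1 hwlim
    have hconst : ∀ r, u r = u 0 := by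
      intro r
      induction r with
      | zero => rfl
      | succ r ih2 =>
        have := congrFun hw0 r
        simp only [hw, Pi.zero_apply, sub_eq_zero] at this
        rw [this, ih2]
    have : Tendsto u atTop (nhds (u 0)) := by
      rw [show u = fun _ => u 0 from funext hconst]
      exact tendsto_const_nhds
    have h0 : u 0 = 0 := tendsto_nhds_unique this hu
    funext r
    rw [hconst r, h0]; rfl

lemma rpow_cast_tendsto (s : ℝ) (hs : 0 < s) :
    Tendsto (fun r : ℕ => ((r : ℝ) ^ s)) atTop atTop :=
  (tendsto_rpow_atTop hs).comp tendsto_natCast_atTop_atTop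

lemma inv_rpow_tendsto (s : ℝ) (hs : 0 < s) :
    Tendsto (fun r : ℕ => ((((r : ℝ) ^ s : ℝ)) : ℂ)⁻¹) atTop (nhds 0) := by
  have h1 : Tendsto (fun r : ℕ => ((r : ℝ) ^ s)⁻¹) atTop (nhds 0) :=
    (rpow_cast_tendsto s hs).inv_tendsto_atTop
  have h2 := (Complex.continuous_ofReal.tendsto 0).comp h1
  simpa [Function.comp_def, Complex.ofReal_inv] using h2

lemma v_tendsto_zero (v : ℕ → ℂ) (s : ℝ) (hs : 0 < s) (c : ℂ)
    (hlim : Tendsto (fun r : ℕ => ((((r : ℝ) ^ s : ℝ)) : ℂ) * v r) atTop (nhds c)) :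
    Tendsto v atTop (nhds 0) := by
  have h := hlim.mul (inv_rpow_tendsto s hs)
  rw [mul_zero] at h
  refine h.congr' ?_
  filter_upwards [eventually_ge_atTop 1] with r hr
  have hr0 : (0:ℝ) < (r:ℝ) := by exact_mod_cast hr
  have hne : (((r : ℝ) ^ s : ℝ) : ℂ) ≠ 0 := by
    simp only [ne_eq, Complex.ofReal_eq_zero]
    exact ne_of_gt (Real.rpow_pos_of_pos hr0 s)
  field_simp

lemma shifted_power_limit (v : ℕ → ℂ) (s : ℝ) (hs : 0 < s) (c : ℂ) (i : ℕ)
    (hlim : Tendsto (fun r : ℕ => ((((r : ℝ) ^ s : ℝ)) : ℂ) * v r) atTop (nhds c)) :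
    Tendsto (fun r : ℕ => ((((r : ℝ) ^ s : ℝ)) : ℂ) * v (r + i)) atTop (nhds c) := by
  have h1 : Tendsto (fun r : ℕ => (((((r + i : ℕ) : ℝ) ^ s : ℝ)) : ℂ) * v (r + i))
      atTop (nhds c) := hlim.comp (tendsto_add_atTop_nat i)
  have hratio : Tendsto (fun r : ℕ => ((((r : ℝ) ^ s / ((r + i : ℕ) : ℝ) ^ s : ℝ)) : ℂ))
      atTop (nhds 1) := by
    have hd : Tendsto (fun r : ℕ => (r : ℝ) / ((r : ℝ) + (i : ℝ))) atTop (nhds 1) :=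
      tendsto_natCast_div_add_atTop (i : ℝ)
    have hc : ContinuousAt (fun x : ℝ => x ^ s) 1 :=
      Real.continuousAt_rpow_const 1 s (Or.inl one_ne_zero)
    have h2 : Tendsto (fun r : ℕ => ((r : ℝ) / ((r : ℝ) + (i : ℝ))) ^ s) atTop (nhds (1 ^ s)) :=
      hc.tendsto.comp hd
    rw [Real.one_rpow] at h2
    have h3 : Tendsto (fun r : ℕ => (r : ℝ) ^ s / ((r : ℝ) + (i : ℝ)) ^ s) atTop (nhds 1) := by
      refine h2.congr' ?_
      filter_upwards [eventually_ge_atTop 0] with r _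
      rw [Real.div_rpow (by positivity) (by positivity)]
    have h4 := (Complex.continuous_ofReal.tendsto 1).comp h3
    simpa [Function.comp_def, Nat.cast_add, Complex.ofReal_div] using h4
  have h5 := hratio.mul h1
  rw [one_mul] at h5
  refine h5.congr' ?_
  filter_upwards [eventually_ge_atTop 1] with r hr
  have hr0 : (0:ℝ) < (r:ℝ) := by exact_mod_cast hr
  have hden : (0:ℝ) < ((r + i : ℕ) : ℝ) := by positivity
  have hdne : ((((r + i : ℕ) : ℝ) ^ s : ℝ) : ℂ) ≠ 0 := by
    simp only [ne_eq, Complex.ofReal_eq_zero]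
    exact ne_of_gt (Real.rpow_pos_of_pos hden s)
  push_cast at hdne ⊢
  field_simp

lemma scalar_no_power_law (p : ℂ[X]) (hp : p ≠ 0) (v : ℕ → ℂ)
    (hrec : (aeval (shiftL ℂ) p) v = 0) (s : ℝ) (hs : 0 < s) (c : ℂ)
    (hlim : Tendsto (fun r : ℕ => ((((r : ℝ) ^ s : ℝ)) : ℂ) * v r) atTop (nhds c)) :
    c = 0 := by
  set m := rootMultiplicity 1 p with hm
  set q := p /ₘ (X - C 1) ^ m with hqdef
  have hfac : (X - C 1) ^ m * q = p := pow_mul_divByMonic_rootMultiplicity_eq p 1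
  have hq1 : q.eval 1 ≠ 0 := eval_divByMonic_pow_rootMultiplicity_ne_zero 1 hp
  set u : ℕ → ℂ := (aeval (shiftL ℂ) q) v with hu
  have haevalpow : aeval (shiftL ℂ) (((X - C 1 : ℂ[X])) ^ m) = (shiftL ℂ - 1) ^ m := by
    rw [map_pow, map_sub, aeval_X, aeval_C, map_one]
  have h1 : ((shiftL ℂ - 1) ^ m) u = 0 := by
    rw [hu, ← Module.End.mul_apply, ← haevalpow, ← map_mul, hfac, hrec]
  have hv0 : Tendsto v atTop (nhds 0) := v_tendsto_zero v s hs c hlim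
  have hu0 : Tendsto u atTop (nhds 0) := by
    have : Tendsto (fun r => ∑ i ∈ Finset.range (q.natDegree + 1), q.coeff i • v (r + i))
        atTop (nhds 0) := by
      have := tendsto_finset_sum (Finset.range (q.natDegree + 1))
        (fun i _ => (hv0.comp (tendsto_add_atTop_nat i)).const_smul (q.coeff i))
      simpa using this
    exact this.congr fun r => (aeval_shiftL q v r).symm
  have hu2 : u = 0 := sub_one_pow_eq_zero_of_tendsto m u h1 hu0
  have hscal : ∀ r, ∑ i ∈ Finset.range (q.natDegree + 1), q.coeff i * v (r + i) = 0 := by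
    intro r
    have := congrFun hu2 r
    rw [hu, aeval_shiftL] at this
    simpa using this
  have hF : Tendsto (fun r : ℕ => ∑ i ∈ Finset.range (q.natDegree + 1),
      q.coeff i * (((((r : ℝ) ^ s : ℝ)) : ℂ) * v (r + i))) atTop (nhds (q.eval 1 * c)) := by
    have := tendsto_finset_sum (Finset.range (q.natDegree + 1))
      (fun i _ => (shifted_power_limit v s hs c i hlim).const_mul (q.coeff i))
    have heq : ∑ i ∈ Finset.range (q.natDegree + 1), q.coeff i * c = q.eval 1 * c := by
      rw [eval_eq_sum_range, Finset.sum_mul]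
      simp
    rwa [heq] at this
  have hF0 : (fun r : ℕ => ∑ i ∈ Finset.range (q.natDegree + 1),
      q.coeff i * (((((r : ℝ) ^ s : ℝ)) : ℂ) * v (r + i))) = fun _ => (0:ℂ) := by
    funext r
    have : ∑ i ∈ Finset.range (q.natDegree + 1),
        q.coeff i * (((((r : ℝ) ^ s : ℝ)) : ℂ) * v (r + i))
        = ((((r : ℝ) ^ s : ℝ)) : ℂ) * ∑ i ∈ Finset.range (q.natDegree + 1),
            q.coeff i * v (r + i) := by
      rw [Finset.mul_sum]
      exact Finset.sum_congr rfl fun i _ => by ring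
    rw [this, hscal, mul_zero]
  rw [hF0] at hF
  have := tendsto_nhds_unique hF tendsto_const_nhds
  exact (mul_eq_zero.mp this).resolve_left hq1

lemma det_poly_ne_zero (d R : ℕ) (C : Fin (R + 1) → Matrix (Fin d) (Fin d) ℂ)
    (hreg : ∃ z : ℂ, (∑ n : Fin (R + 1), z ^ (R - (n : ℕ)) • C n).det ≠ 0) :
    (∑ n : Fin (R + 1), (X : ℂ[X]) ^ (n : ℕ) • (C n).map Polynomial.C).det ≠ 0 := by
  obtain ⟨z₀, hz₀⟩ := hreg
  set N : Matrix (Fin d) (Fin d) ℂ[X] :=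
    ∑ n : Fin (R + 1), (X : ℂ[X]) ^ (R - (n : ℕ)) • (C n).map Polynomial.C with hN
  have hmapN : ∀ w : ℂ, N.map (evalRingHom w) = ∑ n : Fin (R + 1), w ^ (R - (n : ℕ)) • C n := by
    intro w
    ext i j
    simp [hN, Matrix.sum_apply, Matrix.map_apply, eval_finset_sum]
    exact Finset.sum_congr rfl fun n _ => mul_comm _ _
  have hNdet : N.det ≠ 0 := by
    have e := (evalRingHom z₀).map_det N
    rw [RingHom.mapMatrix_apply, hmapN] at e
    exact fun h => hz₀ (by rw [← e, h, map_zero])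
  have hq : X * N.det ≠ 0 := mul_ne_zero X_ne_zero hNdet
  have hex : ∃ z : ℂ, (X * N.det).eval z ≠ 0 := by
    by_contra hc
    push_neg at hc
    exact hq (Polynomial.funext fun r => by rw [hc r]; simp)
  obtain ⟨z, hz⟩ := hex
  rw [eval_mul, eval_X] at hz
  have hzne : z ≠ 0 := fun h => hz (by rw [h, zero_mul])
  have hNz : (N.det).eval z ≠ 0 := fun h => hz (by rw [h, mul_zero])
  set Mm : Matrix (Fin d) (Fin d) ℂ[X] :=
    ∑ n : Fin (R + 1), (X : ℂ[X]) ^ (n : ℕ) • (C n).map Polynomial.C with hM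
  have hmapM : Mm.map (evalRingHom z⁻¹) = ∑ n : Fin (R + 1), (z⁻¹) ^ (n : ℕ) • C n := by
    ext i j
    simp [hM, Matrix.sum_apply, Matrix.map_apply, eval_finset_sum]
    exact Finset.sum_congr rfl fun n _ => mul_comm _ _
  intro hdet0
  apply hNz
  have hrel : N.map (evalRingHom z) = (z ^ R) • (Mm.map (evalRingHom z⁻¹)) := by
    rw [hmapN, hmapM, Finset.smul_sum]
    refine Finset.sum_congr rfl fun n _ => ?_
    rw [smul_smul]
    congr 1
    rw [inv_pow, pow_sub₀ z hzne (Nat.le_of_lt_succ n.isLt)]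
  have e1 : (N.det).eval z = (N.map (evalRingHom z)).det := by
    have := (evalRingHom z).map_det N; rwa [RingHom.mapMatrix_apply] at this
  have e2 : (Mm.det).eval z⁻¹ = (Mm.map (evalRingHom z⁻¹)).det := by
    have := (evalRingHom z⁻¹).map_det Mm; rwa [RingHom.mapMatrix_apply] at this
  rw [e1, hrel, Matrix.det_smul, ← e2, hdet0]
  simp

def matHom (d : ℕ) :
    Matrix (Fin d) (Fin d) ℂ →+* Module.End ℂ (ℕ → Fin d → ℂ) where
  toFun A := A.mulVecLin.compLeft ℕ
  map_one' := by apply LinearMap.ext; intro v; funext r; simp [LinearMap.compLeft]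
  map_mul' A B := by apply LinearMap.ext; intro v; funext r; simp [LinearMap.compLeft]; exact (Matrix.mulVec_mulVec _ _ _).symm
  map_zero' := by apply LinearMap.ext; intro v; funext r; simp [LinearMap.compLeft]
  map_add' A B := by apply LinearMap.ext; intro v; funext r; simp [LinearMap.compLeft]; rfl

lemma matHom_commute {d : ℕ} (A : Matrix (Fin d) (Fin d) ℂ) :
    Commute (matHom d A) (shiftL (Fin d → ℂ)) := by
  apply LinearMap.ext; intro v; funext r; rfl

def psiHom (d : ℕ) :
    (Matrix (Fin d) (Fin d) ℂ)[X] →+* Module.End ℂ (ℕ → Fin d → ℂ) :=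
  eval₂RingHom' (matHom d) (shiftL (Fin d → ℂ)) matHom_commute

lemma aeval_det_eq_zero (d R : ℕ) (C : Fin (R + 1) → Matrix (Fin d) (Fin d) ℂ)
    (γ : ℕ → Fin d → ℂ)
    (hrec : ∀ r : ℕ, ∑ n : Fin (R + 1), (C n).mulVec (γ (r + n)) = 0) :
    (aeval (shiftL (Fin d → ℂ))
      ((∑ n : Fin (R + 1), (X : ℂ[X]) ^ (n : ℕ) • (C n).map Polynomial.C).det)) γ = 0 := by
  classical
  set Mm : Matrix (Fin d) (Fin d) ℂ[X] :=
    ∑ n : Fin (R + 1), (X : ℂ[X]) ^ (n : ℕ) • (C n).map Polynomial.C with hMm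
  set M' : (Matrix (Fin d) (Fin d) ℂ)[X] :=
    ∑ n : Fin (R + 1), Polynomial.C (C n) * X ^ (n : ℕ) with hM'
  have hequiv : matPolyEquiv Mm = M' := by
    apply Polynomial.ext; intro k
    apply Matrix.ext; intro i j
    rw [matPolyEquiv_coeff_apply]
    have hL : (Mm i j).coeff k
        = ∑ n : Fin (R + 1), (if k = (n : ℕ) then C n i j else 0) := by
      rw [hMm, Matrix.sum_apply, Polynomial.finset_sum_coeff]
      refine Finset.sum_congr rfl fun n _ => ?_
      rw [Matrix.smul_apply, Matrix.map_apply, smul_eq_mul, mul_comm, coeff_C_mul, coeff_X_pow,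
        mul_ite, mul_one, mul_zero]
    have hR : M'.coeff k i j
        = ∑ n : Fin (R + 1), (if k = (n : ℕ) then C n i j else 0) := by
      rw [hM', Polynomial.finset_sum_coeff, Matrix.sum_apply]
      refine Finset.sum_congr rfl fun n _ => ?_
      rw [coeff_C_mul, coeff_X_pow, mul_ite, mul_one, mul_zero]
      split_ifs <;> simp
    rw [hL, hR]
  have hpsiM' : (psiHom d) M' γ = 0 := by
    have h1 : (psiHom d) M'
        = ∑ n : Fin (R + 1), (matHom d (C n)) * (shiftL (Fin d → ℂ)) ^ (n : ℕ) := by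
      rw [hM', map_sum]
      refine Finset.sum_congr rfl fun n _ => ?_
      rw [map_mul, map_pow]
      simp [psiHom, eval₂_C, eval₂_X]
    rw [h1]
    funext r
    rw [LinearMap.coe_sum, Finset.sum_apply, Finset.sum_apply]
    have h2 : ∀ n : Fin (R + 1),
        ((matHom d (C n)) * (shiftL (Fin d → ℂ)) ^ (n : ℕ)) γ r
          = (C n).mulVec (γ (r + (n : ℕ))) := by
      intro n
      rw [Module.End.mul_apply]
      show ((C n).mulVecLin.compLeft ℕ) (((shiftL (Fin d → ℂ)) ^ (n : ℕ)) γ) r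
        = (C n).mulVec (γ (r + (n : ℕ)))
      simp [LinearMap.compLeft, shiftL_pow]
      exact congrArg (C n).mulVec (shiftL_pow _ γ r)
    rw [Finset.sum_congr rfl fun n _ => h2 n]
    exact hrec r
  have hadj : Mm.adjugate * Mm = Mm.det • 1 := Matrix.adjugate_mul Mm
  have hadj' : matPolyEquiv Mm.adjugate * M'
      = (Mm.det).map (algebraMap ℂ (Matrix (Fin d) (Fin d) ℂ)) := by
    rw [← hequiv, ← map_mul, hadj, matPolyEquiv_smul_one]
  have hmapped : (psiHom d) ((Mm.det).map (algebraMap ℂ (Matrix (Fin d) (Fin d) ℂ))) γ = 0 := by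
    rw [← hadj', map_mul, Module.End.mul_apply, hpsiM', map_zero]
  have hcomp : (matHom d).comp (algebraMap ℂ (Matrix (Fin d) (Fin d) ℂ))
      = algebraMap ℂ (Module.End ℂ (ℕ → Fin d → ℂ)) := by
    apply RingHom.ext; intro c
    apply LinearMap.ext; intro v; funext r
    show ((algebraMap ℂ (Matrix (Fin d) (Fin d) ℂ) c).mulVec (v r)) = _
    rw [Algebra.algebraMap_eq_smul_one, Matrix.smul_mulVec, Matrix.one_mulVec,
      Module.algebraMap_end_apply]
    rfl
  have hconv : (psiHom d) ((Mm.det).map (algebraMap ℂ (Matrix (Fin d) (Fin d) ℂ)))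
      = aeval (shiftL (Fin d → ℂ)) Mm.det := by
    show eval₂ (matHom d) (shiftL (Fin d → ℂ)) _ = _
    rw [eval₂_map, hcomp, aeval_def]
  rw [← hconv]
  exact hmapped

end NoPowerLawAux

/-- Proposition 1: a bounded solution `γ` of a matrix difference equation
`∑ₙ Cₙ γ(r+n) = 0` with regular matrix pencil cannot follow a power-law decay:
if `r^s γ(r)ⱼ → c` for some `s > 0`, then `c = 0`. -/
theorem matrix_difference_bounded_solution_no_power_law
    (d R : ℕ) (hR : 1 ≤ R)
    (C : Fin (R + 1) → Matrix (Fin d) (Fin d) ℂ)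
    (hreg : ∃ z : ℂ, (∑ n : Fin (R + 1), z ^ (R - (n : ℕ)) • C n).det ≠ 0)
    (γ : ℕ → (Fin d → ℂ))
    (hbdd : ∃ M : ℝ, ∀ r : ℕ, ‖γ r‖ ≤ M)
    (hrec : ∀ r : ℕ, ∑ n : Fin (R + 1), (C n).mulVec (γ (r + n)) = 0) :
    ∀ j : Fin d, ∀ s : ℝ, 0 < s → ∀ c : ℂ,
      Filter.Tendsto (fun r : ℕ => (((r : ℝ) ^ s : ℝ) : ℂ) * γ r j) Filter.atTop (nhds c) →
      c = 0 := by
  intro j s hs c hlim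
  set p : Polynomial ℂ :=
    (∑ n : Fin (R + 1), (Polynomial.X : Polynomial ℂ) ^ (n : ℕ) •
      (C n).map Polynomial.C).det with hp
  have hpne : p ≠ 0 := det_poly_ne_zero d R C hreg
  have hvec := aeval_det_eq_zero d R C γ hrec
  have hscalrec : (Polynomial.aeval (shiftL ℂ) p) (fun r => γ r j) = 0 := by
    funext r
    rw [aeval_shiftL]
    have h1 := congrFun (congrFun hvec r) j
    rw [aeval_shiftL] at h1
    simp only [Finset.sum_apply, Pi.smul_apply, smul_eq_mul, Pi.zero_apply] at h1 ⊢
    exact h1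
  exact scalar_no_power_law p hpne _ hscalrec s hs c hlim
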